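/- Let n ≥ 1 and let J, L ⊆ {0, …, n-1}. There exist an integer j and a finite set I ⊆ ℤ with J = ∂ₙ(I) Δ (L - j) if and only if L - j ≡ J (mod n) for some integer j, i.e., if and only if (J, n) and (L, n) have the same necklace type. -/
import Mathlib

/-- The boundary operator `∂ₙ I = I Δ (I - n)` on finite subsets of `ℤ`. -/
def intBd (n : ℤ) (I : Finset ℤ) : Finset ℤ := symmDiff I (I.image (· - n))

lemma intBd_symmDiff (n : ℤ) (A B : Finset ℤ) :
    intBd n (symmDiff A B) = symmDiff (intBd n A) (intBd n B) := by
  unfold intBd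
  rw [Finset.image_symmDiff _ _ (sub_left_injective)]
  exact symmDiff_symmDiff_symmDiff_comm A B _ _

lemma intBd_pair (n : ℤ) : ∀ (k : ℕ) (m : ℤ),
    ∃ I, intBd n I = symmDiff {m} ({m + (k : ℤ) * n} : Finset ℤ) := by
  intro k
  induction k with
  | zero => intro m; exact ⟨∅, by simp [intBd]⟩
  | succ k ih =>
    intro m
    obtain ⟨I, hI⟩ := ih (m + n)
    refine ⟨symmDiff I {m + n}, ?_⟩
    rw [intBd_symmDiff, hI]
    have h1 : intBd n {m + n} = symmDiff ({m + n} : Finset ℤ) {m} := by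
      simp [intBd]
    rw [h1, symmDiff_symmDiff_symmDiff_comm, symmDiff_self, bot_symmDiff, symmDiff_comm]
    congr 2
    push_cast
    ring

lemma intBd_pair' (n : ℤ) (x y : ℤ) (h : n ∣ x - y) :
    ∃ I, intBd n I = symmDiff ({y} : Finset ℤ) {x} := by
  obtain ⟨c, hc⟩ := h
  rcases le_or_gt 0 c with h0 | h0
  · obtain ⟨k, rfl⟩ := Int.eq_ofNat_of_zero_le h0
    obtain ⟨I, hI⟩ := intBd_pair n k y
    refine ⟨I, by rw [hI]; congr 2; linear_combination -hc⟩
  · obtain ⟨k, hk⟩ : ∃ k : ℕ, -c = (k : ℤ) := Int.eq_ofNat_of_zero_le (by omega)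
    obtain ⟨I, hI⟩ := intBd_pair n k x
    refine ⟨I, by rw [hI, symmDiff_comm]; congr 2; linear_combination hc - n * hk⟩

lemma erase_image_eq (n : ℕ) (A : Finset ℤ) (y : ℤ) (hy : y ∈ A)
    (hA : Set.InjOn (fun m : ℤ => (m : ZMod n)) A) :
    (A.erase y).image (fun m : ℤ => (m : ZMod n))
      = (A.image (fun m : ℤ => (m : ZMod n))).erase ((y : ℤ) : ZMod n) := by
  ext r
  simp only [Finset.mem_image, Finset.mem_erase]
  constructor
  · rintro ⟨a, ⟨hay, haA⟩, rfl⟩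
    refine ⟨fun h => hay (hA haA hy h), a, haA, rfl⟩
  · rintro ⟨hr, a, haA, rfl⟩
    exact ⟨a, ⟨fun h => hr (by rw [h]), haA⟩, rfl⟩

lemma symmDiff_erase_singleton (A : Finset ℤ) (y : ℤ) (hy : y ∈ A) :
    symmDiff (A.erase y) ({y} : Finset ℤ) = A := by
  ext a
  simp only [Finset.mem_symmDiff, Finset.mem_erase, Finset.mem_singleton]
  by_cases h : a = y <;> simp [h, hy]

lemma exists_intBd (n : ℕ) : ∀ (N : ℕ) (A B : Finset ℤ), A.card = N →
    Set.InjOn (fun m : ℤ => (m : ZMod n)) A →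
    Set.InjOn (fun m : ℤ => (m : ZMod n)) B →
    A.image (fun m : ℤ => (m : ZMod n)) = B.image (fun m : ℤ => (m : ZMod n)) →
    ∃ I, intBd (n : ℤ) I = symmDiff A B := by
  intro N
  induction N with
  | zero =>
    intro A B hcard _ _ himg
    have hA : A = ∅ := Finset.card_eq_zero.mp hcard
    subst hA
    have hB : B = ∅ := by
      simpa [Finset.image_eq_empty] using himg.symm
    subst hB
    exact ⟨∅, by simp [intBd]⟩
  | succ N ih =>
    intro A B hcard hA hB himg
    obtain ⟨y, hy⟩ := Finset.card_pos.mp (by omega : 0 < A.card)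
    have hyim : ((y : ℤ) : ZMod n) ∈ B.image (fun m : ℤ => (m : ZMod n)) := by
      rw [← himg]; exact Finset.mem_image_of_mem _ hy
    obtain ⟨x, hx, hxy⟩ := Finset.mem_image.mp hyim
    have hdvd : (n : ℤ) ∣ x - y :=
      Int.ModEq.dvd ((ZMod.intCast_eq_intCast_iff y x n).mp hxy.symm)
    obtain ⟨I₀, hI₀⟩ := intBd_pair' (n : ℤ) x y hdvd
    have hA' : Set.InjOn (fun m : ℤ => (m : ZMod n)) (A.erase y) :=
      hA.mono (by simp [Finset.coe_subset, Finset.erase_subset])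
    have hB' : Set.InjOn (fun m : ℤ => (m : ZMod n)) (B.erase x) :=
      hB.mono (by simp [Finset.coe_subset, Finset.erase_subset])
    have himg' : (A.erase y).image (fun m : ℤ => (m : ZMod n))
        = (B.erase x).image (fun m : ℤ => (m : ZMod n)) := by
      rw [erase_image_eq n A y hy hA, erase_image_eq n B x hx hB, himg, hxy]
    obtain ⟨I', hI'⟩ := ih (A.erase y) (B.erase x)
      (by rw [Finset.card_erase_of_mem hy, hcard]; rfl) hA' hB' himg'
    refine ⟨symmDiff I' I₀, ?_⟩
    rw [intBd_symmDiff, hI', hI₀, symmDiff_symmDiff_symmDiff_comm,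
      symmDiff_erase_singleton A y hy, symmDiff_erase_singleton B x hx]

lemma sum_symmDiff_zmod2 (A B : Finset ℤ) (f : ℤ → ZMod 2) :
    (∑ m ∈ symmDiff A B, f m) = (∑ m ∈ A, f m) + (∑ m ∈ B, f m) := by
  have hset : symmDiff A B = (A ∪ B) \ (A ∩ B) := by
    ext a; simp [Finset.mem_symmDiff]; tauto
  have h1 : (∑ m ∈ A ∪ B, f m) + (∑ m ∈ A ∩ B, f m)
      = (∑ m ∈ A, f m) + (∑ m ∈ B, f m) := Finset.sum_union_inter
  have h2 : (∑ m ∈ (A ∪ B) \ (A ∩ B), f m) + (∑ m ∈ A ∩ B, f m)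
      = (∑ m ∈ A ∪ B, f m) :=
    Finset.sum_sdiff Finset.inter_subset_union
  have key : (2 : ZMod 2) = 0 := rfl
  rw [hset]
  linear_combination h1 + h2 - (∑ m ∈ A ∩ B, f m) * key

lemma sum_intBd (n : ℕ) (I : Finset ℤ) (r : ZMod n) :
    (∑ m ∈ intBd (n : ℤ) I, (if ((m : ℤ) : ZMod n) = r then (1 : ZMod 2) else 0)) = 0 := by
  rw [show intBd (n : ℤ) I = symmDiff I (I.image (· - (n : ℤ))) from rfl,
    sum_symmDiff_zmod2, Finset.sum_image (by intro a _ b _ h; simpa using h)]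
  have hcast : ∀ m : ℤ, ((m - (n : ℤ) : ℤ) : ZMod n) = ((m : ℤ) : ZMod n) := by
    intro m; push_cast; simp
  simp only [hcast]
  have : ∀ x : ZMod 2, x + x = 0 := by decide
  exact this _

lemma sum_injOn (n : ℕ) (A : Finset ℤ)
    (hA : Set.InjOn (fun m : ℤ => (m : ZMod n)) A) (r : ZMod n) :
    (∑ m ∈ A, (if ((m : ℤ) : ZMod n) = r then (1 : ZMod 2) else 0))
      = if r ∈ A.image (fun m : ℤ => (m : ZMod n)) then 1 else 0 := by
  rw [Finset.sum_boole]
  by_cases h : r ∈ A.image (fun m : ℤ => (m : ZMod n))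
  · obtain ⟨a, ha, rfl⟩ := Finset.mem_image.mp h
    have : A.filter (fun m : ℤ => ((m : ℤ) : ZMod n) = ((a : ℤ) : ZMod n)) = {a} := by
      ext b
      simp only [Finset.mem_filter, Finset.mem_singleton]
      constructor
      · rintro ⟨hb, hba⟩; exact hA hb ha hba
      · rintro rfl; exact ⟨ha, rfl⟩
    rw [this]
    simp [h]
  · have : A.filter (fun m : ℤ => ((m : ℤ) : ZMod n) = r) = ∅ := by
      ext b
      simp only [Finset.mem_filter, Finset.notMem_empty, iff_false, not_and]
      intro hb hbr
      exact h (Finset.mem_image.mpr ⟨b, hb, hbr⟩)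
    rw [this]
    simp [h]

lemma injOn_of_subset_Ico (n : ℕ) (A : Finset ℤ) (hA : A ⊆ Finset.Ico (0 : ℤ) (n : ℤ)) :
    Set.InjOn (fun m : ℤ => (m : ZMod n)) A := by
  intro a ha b hb hab
  have hd : (n : ℤ) ∣ b - a := Int.ModEq.dvd ((ZMod.intCast_eq_intCast_iff a b n).mp hab)
  have ha' := Finset.mem_Ico.mp (hA ha)
  have hb' := Finset.mem_Ico.mp (hA hb)
  have := Int.eq_zero_of_abs_lt_dvd hd (by rw [abs_lt]; omega)
  omega

lemma injOn_shift (n : ℕ) (L : Finset ℤ) (j : ℤ)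
    (hL : Set.InjOn (fun m : ℤ => (m : ZMod n)) L) :
    Set.InjOn (fun m : ℤ => (m : ZMod n)) (L.image (· - j)) := by
  intro a ha b hb hab
  simp only [Finset.coe_image, Set.mem_image, Finset.mem_coe] at ha hb
  obtain ⟨l₁, hl₁, rfl⟩ := ha
  obtain ⟨l₂, hl₂, rfl⟩ := hb
  simp only at hab ⊢
  have : ((l₁ : ℤ) : ZMod n) = ((l₂ : ℤ) : ZMod n) := by
    have := congrArg (· + (j : ZMod n)) hab
    push_cast at this ⊢
    simpa [sub_add_cancel] using this
  rw [hL hl₁ hl₂ this]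

theorem stmt_5 (n : ℕ) (hn : 1 ≤ n) (J L : Finset ℤ)
    (hJ : J ⊆ Finset.Ico (0 : ℤ) (n : ℤ)) (hL : L ⊆ Finset.Ico (0 : ℤ) (n : ℤ)) :
    (∃ (j : ℤ) (I : Finset ℤ), J = symmDiff (intBd (n : ℤ) I) (L.image (· - j)))
      ↔
    (∃ j : ℤ, (L.image (· - j)).image (fun m : ℤ => (m : ZMod n))
        = J.image (fun m : ℤ => (m : ZMod n))) := by
  have hJinj : Set.InjOn (fun m : ℤ => (m : ZMod n)) J := injOn_of_subset_Ico n J hJ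
  have hLinj : Set.InjOn (fun m : ℤ => (m : ZMod n)) L := injOn_of_subset_Ico n L hL
  constructor
  · rintro ⟨j, I, hJI⟩
    refine ⟨j, ?_⟩
    set S := L.image (· - j) with hS
    have hSinj : Set.InjOn (fun m : ℤ => (m : ZMod n)) S := injOn_shift n L j hLinj
    ext r
    have key : (if r ∈ S.image (fun m : ℤ => (m : ZMod n)) then (1 : ZMod 2) else 0)
        = if r ∈ J.image (fun m : ℤ => (m : ZMod n)) then 1 else 0 := by
      rw [← sum_injOn n S hSinj r, ← sum_injOn n J hJinj r, hJI,
        sum_symmDiff_zmod2, sum_intBd, zero_add]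
    by_cases h1 : r ∈ S.image (fun m : ℤ => (m : ZMod n)) <;>
      by_cases h2 : r ∈ J.image (fun m : ℤ => (m : ZMod n)) <;>
      simp [h1, h2] at key ⊢
  · rintro ⟨j, himg⟩
    refine ⟨j, ?_⟩
    obtain ⟨I, hI⟩ := exists_intBd n J.card J (L.image (· - j)) rfl hJinj
      (injOn_shift n L j hLinj) himg.symm
    exact ⟨I, by rw [hI, symmDiff_symmDiff_cancel_right]⟩
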